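/- Let M be a closed Riemannian manifold, A ⊂ M × M, and K ⊂ TM the union over p ∈ M of the star-shaped regions K_p = { t·v : v ∈ C̃ut_p(M), t ∈ [0,1] }. Then there exists a continuous geodesic motion planner s : A → GM if and only if there exists a continuous local section σ : A → K of the restricted extended exponential map Exp|_K : K → M × M. -/

import Mathlib

/- STATEMENT 13.
Abstract model of a closed Riemannian manifold as in Statement 12: `M` with its
Riemannian distance, tangent bundle `TM` with projection `proj`, fiberwise scalar
multiplication `smul` and norm `nrm`, exponential map `em` (`Exp w = (proj w, em w)`),
the set `K = ⋃_p K_p = { t·v : v ∈ C̃ut_p(M), t ∈ [0,1] } = {w | d(proj w, em w) = nrm w}`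
of initial vectors of minimal geodesic segments, and the continuous map
`nu : GM → TM`, `γ ↦ γ'(0)` (given as data, with `nu (t ↦ em (smul t w)) = w` for
`w ∈ K`).  Minimal geodesic segments are exactly the curves `t ↦ em (smul t w)` with
`w ∈ K`.  Conclusion: for `A ⊆ M × M`, there is a continuous geodesic motion planner
`s : A → GM` iff there is a continuous local section `σ : A → K` of `Exp|_K`. -/
theorem geodesic_planner_iff_section
    (M : Type*) [MetricSpace M] [CompactSpace M]
    (TM : Type*) [TopologicalSpace TM]
    (proj : TM → M) (hproj : Continuous proj)
    (smul : ℝ → TM → TM) (hsmul : Continuous fun z : ℝ × TM => smul z.1 z.2)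
    (hsmul_proj : ∀ t w, proj (smul t w) = proj w)
    (hsmul_one : ∀ w, smul 1 w = w)
    (nrm : TM → ℝ) (hnrm : Continuous nrm)
    (em : TM → M) (hem : Continuous em)
    (K : Set TM) (hK : K = {w | dist (proj w) (em w) = nrm w})
    -- the continuous map `ν : GM → TM`, `γ ↦ γ'(0)`
    (nu : C(unitInterval, M) → TM) (hnu_cont : Continuous nu)
    (hnu : ∀ w ∈ K, nu
      (ContinuousMap.mk (fun t : unitInterval => em (smul (t : ℝ) w))
        (hem.comp (hsmul.comp (continuous_subtype_val.prodMk continuous_const)))) = w)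
    (A : Set (M × M)) :
    (∃ s : ↥A → C(unitInterval, M), Continuous s ∧
        ∀ a : ↥A, ∃ w ∈ K, proj w = (a : M × M).1 ∧ em w = (a : M × M).2 ∧
          ∀ t : unitInterval, s a t = em (smul (t : ℝ) w)) ↔
      (∃ sec : ↥A → TM, Continuous sec ∧ ∀ a : ↥A, sec a ∈ K ∧
        proj (sec a) = (a : M × M).1 ∧ em (sec a) = (a : M × M).2) := by
  constructor
  · rintro ⟨s, hs_cont, hs⟩
    refine ⟨fun a => nu (s a), hnu_cont.comp hs_cont, fun a => ?_⟩
    obtain ⟨w, hwK, hw1, hw2, hw3⟩ := hs a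
    have hsa : s a = ContinuousMap.mk (fun t : unitInterval => em (smul (t : ℝ) w))
        (hem.comp (hsmul.comp (continuous_subtype_val.prodMk continuous_const))) := by
      ext t; exact hw3 t
    have : nu (s a) = w := by rw [hsa]; exact hnu w hwK
    dsimp only; rw [this]; exact ⟨hwK, hw1, hw2⟩
  · rintro ⟨sec, hsec_cont, hsec⟩
    refine ⟨fun a => ContinuousMap.mk (fun t : unitInterval => em (smul (t : ℝ) (sec a)))
      (hem.comp (hsmul.comp (continuous_subtype_val.prodMk continuous_const))), ?_, ?_⟩
    · apply ContinuousMap.continuous_of_continuous_uncurry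
      exact hem.comp (hsmul.comp ((continuous_subtype_val.comp continuous_snd).prodMk
        (hsec_cont.comp continuous_fst)))
    · intro a
      obtain ⟨hK', h1, h2⟩ := hsec a
      exact ⟨sec a, hK', h1, h2, fun t => rfl⟩
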